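/- Let D₋₂, D₋₁, D₀, D₁, D₂ be the five 3×3 complex matrices defined by (D_m)_{ij} = n^{(i−2)}_{j, m+3}, where N⁽⁻¹⁾, N⁽⁰⁾, N⁽¹⁾ are the explicit 3×5 matrices given by: N⁽⁻¹⁾ has rows (3√5/5, 0, −√30/10, 0, 0), (3√5/5·i, 0, √30/10·i, 0, 0), (0, 3√5/5, 0, 0, 0); N⁽⁰⁾ has rows (0, 3√10/10, 0, −3√10/10, 0), (0, 3√10/10·i, 0, 3√10/10·i, 0), (0, 0, 2√15/5, 0, 0); N⁽¹⁾ has rows (0, 0, √30/10, 0, −3√5/5), (0, 0, √30/10·i, 0, 3√5/5·i), (0, 0, 0, 3√5/5, 0). Then for every nonzero vector a ∈ ℂ³, the 3×5 matrix with columns D₋₂a, D₋₁a, D₀a, D₁a, D₂a has rank 3. -/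
import Mathlib


open Real Complex Matrix

/-- `N⁽⁻¹⁾, N⁽⁰⁾, N⁽¹⁾`: the explicit `3×5` complex matrices of the paper,
indexed here by `Fin 3` (index `h` corresponds to `N⁽ʰ⁻¹⁾`). -/
noncomputable def Nmat : Fin 3 → Matrix (Fin 3) (Fin 5) ℂ :=
  ![!![((3 * Real.sqrt 5 / 5 : ℝ) : ℂ), 0, -((Real.sqrt 30 / 10 : ℝ) : ℂ), 0, 0;
      ((3 * Real.sqrt 5 / 5 : ℝ) : ℂ) * Complex.I, 0,
        ((Real.sqrt 30 / 10 : ℝ) : ℂ) * Complex.I, 0, 0;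
      0, ((3 * Real.sqrt 5 / 5 : ℝ) : ℂ), 0, 0, 0],
    !![0, ((3 * Real.sqrt 10 / 10 : ℝ) : ℂ), 0, -((3 * Real.sqrt 10 / 10 : ℝ) : ℂ), 0;
      0, ((3 * Real.sqrt 10 / 10 : ℝ) : ℂ) * Complex.I, 0,
        ((3 * Real.sqrt 10 / 10 : ℝ) : ℂ) * Complex.I, 0;
      0, 0, ((2 * Real.sqrt 15 / 5 : ℝ) : ℂ), 0, 0],
    !![0, 0, ((Real.sqrt 30 / 10 : ℝ) : ℂ), 0, -((3 * Real.sqrt 5 / 5 : ℝ) : ℂ);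
      0, 0, ((Real.sqrt 30 / 10 : ℝ) : ℂ) * Complex.I, 0,
        ((3 * Real.sqrt 5 / 5 : ℝ) : ℂ) * Complex.I;
      0, 0, 0, ((3 * Real.sqrt 5 / 5 : ℝ) : ℂ), 0]]

/-- The `3×3` matrices `D_m` (`m = -2,…,2`, indexed here by `Fin 5`):
`(D_m)_{ij} = n^{(i-2)}_{j, m+3}`. -/
noncomputable def Dmat (m : Fin 5) : Matrix (Fin 3) (Fin 3) ℂ :=
  Matrix.of fun i j => Nmat i j m

private lemma aux_mul_zero {x y z : ℂ} (hx : x ≠ 0) (hy : y ≠ 0)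
    (h : x * (y * z) = 0) : z = 0 := by
  rcases mul_eq_zero.mp h with h' | h'
  · exact absurd h' hx
  · rcases mul_eq_zero.mp h' with h'' | h''
    exacts [absurd h'' hy, h'']


/-- For every nonzero `a ∈ ℂ³`, the `3×5` matrix with columns
`D₋₂a, D₋₁a, D₀a, D₁a, D₂a` has rank `3`. -/
theorem rank_D_columns_eq_three (a : Fin 3 → ℂ) (ha : a ≠ 0) :
    (Matrix.of fun (i : Fin 3) (m : Fin 5) => (Dmat m).mulVec a i).rank = 3 := by
  set M : Matrix (Fin 3) (Fin 5) ℂ :=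
    Matrix.of fun (i : Fin 3) (m : Fin 5) => (Dmat m).mulVec a i with hM
  rw [← Matrix.rank_transpose]
  have hs5 : ((3 * Real.sqrt 5 / 5 : ℝ) : ℂ) ≠ 0 := by
    rw [Complex.ofReal_ne_zero]; positivity
  have hs10 : ((3 * Real.sqrt 10 / 10 : ℝ) : ℂ) ≠ 0 := by
    rw [Complex.ofReal_ne_zero]; positivity
  have hs30 : ((Real.sqrt 30 / 10 : ℝ) : ℂ) ≠ 0 := by
    rw [Complex.ofReal_ne_zero]; positivity
  have hs15 : ((2 * Real.sqrt 15 / 5 : ℝ) : ℂ) ≠ 0 := by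
    rw [Complex.ofReal_ne_zero]; positivity
  have hinj : Function.Injective Mᵀ.mulVecLin := by
    rw [← LinearMap.ker_eq_bot, Submodule.eq_bot_iff]
    intro c hc
    simp only [LinearMap.mem_ker, Matrix.mulVecLin_apply] at hc
    have h0 := congrFun hc 0
    have h1 := congrFun hc 1
    have h2 := congrFun hc 2
    have h3 := congrFun hc 3
    have h4 := congrFun hc 4
    simp only [hM, Matrix.mulVec, dotProduct, Matrix.transpose_apply, Matrix.of_apply,
      Dmat, Nmat, Fin.sum_univ_three, Matrix.cons_val_zero, Matrix.cons_val_one, Matrix.head_cons,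
      Matrix.cons_val', Matrix.cons_val_fin_one, Matrix.empty_val', Matrix.head_fin_const,
      Pi.zero_apply, Matrix.cons_val_two, Matrix.tail_cons, Matrix.cons_val_three,
      Matrix.cons_val_four, Fin.isValue] at h0 h1 h2 h3 h4
    have hc0' : ∀ i, c i = 0 := by
      by_cases hcu : a 0 + Complex.I * a 1 ≠ 0
      · have c0 : c 0 = 0 := by
          refine aux_mul_zero hs5 hcu ?_; linear_combination h0
        have c1 : c 1 = 0 := by
          refine aux_mul_zero hs10 hcu ?_
          linear_combination h1 - ((3 * Real.sqrt 5 / 5 : ℝ) : ℂ) * a 2 * c0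
        have c2 : c 2 = 0 := by
          refine aux_mul_zero hs30 hcu ?_
          linear_combination h2 - ((Real.sqrt 30 / 10 : ℝ) : ℂ) * (-a 0 + Complex.I * a 1) * c0
            - ((2 * Real.sqrt 15 / 5 : ℝ) : ℂ) * a 2 * c1
        intro i; fin_cases i <;> assumption
      · push_neg at hcu
        by_cases hcv : -a 0 + Complex.I * a 1 ≠ 0
        · have c2 : c 2 = 0 := by
            refine aux_mul_zero hs5 hcv ?_; linear_combination h4
          have c1 : c 1 = 0 := by
            refine aux_mul_zero hs10 hcv ?_
            linear_combination h3 - ((3 * Real.sqrt 5 / 5 : ℝ) : ℂ) * a 2 * c2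
          have c0 : c 0 = 0 := by
            refine aux_mul_zero hs30 hcv ?_
            linear_combination h2 - ((2 * Real.sqrt 15 / 5 : ℝ) : ℂ) * a 2 * c1
              - ((Real.sqrt 30 / 10 : ℝ) : ℂ) * (a 0 + Complex.I * a 1) * c2
          intro i; fin_cases i <;> assumption
        · push_neg at hcv
          have ha0 : a 0 = 0 := by linear_combination (hcu - hcv) / 2
          have ha1 : a 1 = 0 := by
            have : Complex.I * a 1 = 0 := by linear_combination hcu - ha0
            simpa [Complex.I_ne_zero] using this
          have ha2 : a 2 ≠ 0 := by
            intro h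
            exact ha (funext fun i => by fin_cases i <;> simp [ha0, ha1, h])
          rw [ha0, ha1] at h1 h2 h3
          have c0 : c 0 = 0 := aux_mul_zero hs5 ha2 (by linear_combination h1)
          have c1 : c 1 = 0 := aux_mul_zero hs15 ha2 (by linear_combination h2)
          have c2 : c 2 = 0 := aux_mul_zero hs5 ha2 (by linear_combination h3)
          intro i; fin_cases i <;> assumption
    exact funext hc0'
  rw [Matrix.rank, LinearMap.finrank_range_of_inj hinj]
  simp
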